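/- arXiv:2406.13608 — 4 statements merged into one kernel-verified Lean document; each statement's English description precedes it below -/
import Mathlib

section
/- Let h(x) = -x log₂ x - (1-x) log₂(1-x) be the binary entropy function. For 0 < p < 1/2 and 0 < q < 1/2, we have h(p) + h(q) - h(p ⊛ q) < min(h(p), h(q)), where p ⊛ q = p(1-q) + q(1-p). That is, the 2-private commitment capacity of the independent BS-BC channel is strictly smaller than the 1-private capacity. -/
/-- Binary entropy function (base 2). -/
noncomputable def binEnt (x : ℝ) : ℝ :=
  -(x * Real.logb 2 x) - (1 - x) * Real.logb 2 (1 - x)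

/-- Binary convolution `p ⊛ q`. -/
def binConv (p q : ℝ) : ℝ := p * (1 - q) + q * (1 - p)

lemma binEnt_eq (x : ℝ) : binEnt x = Real.binEntropy x / Real.log 2 := by
  simp [binEnt, Real.binEntropy, Real.logb, Real.log_inv]
  ring

theorem twoPrivate_lt_onePrivate (p q : ℝ)
    (hp0 : 0 < p) (hp : p < 1/2) (hq0 : 0 < q) (hq : q < 1/2) :
    binEnt p + binEnt q - binEnt (binConv p q) < min (binEnt p) (binEnt q) := by
  have hlog2 : (0:ℝ) < Real.log 2 := Real.log_pos (by norm_num)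
  have hmemp : p ∈ Set.Icc (0:ℝ) 2⁻¹ := ⟨hp0.le, by linarith⟩
  have hmemq : q ∈ Set.Icc (0:ℝ) 2⁻¹ := ⟨hq0.le, by linarith⟩
  have hmemc : binConv p q ∈ Set.Icc (0:ℝ) 2⁻¹ := by
    constructor
    · unfold binConv; nlinarith
    · unfold binConv; nlinarith
  have h1 : binEnt p < binEnt (binConv p q) := by
    rw [binEnt_eq, binEnt_eq]
    exact div_lt_div_of_pos_right
        (Real.binEntropy_strictMonoOn hmemp hmemc (by unfold binConv; nlinarith)) hlog2
  have h2 : binEnt q < binEnt (binConv p q) := by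
    rw [binEnt_eq, binEnt_eq]
    exact div_lt_div_of_pos_right
        (Real.binEntropy_strictMonoOn hmemq hmemc (by unfold binConv; nlinarith)) hlog2
  rw [lt_min_iff]
  constructor <;> linarith
end

section
/- Let X be uniform on {0,1}, and let Y and Z be outputs of independent binary symmetric channels BSC(p) and BSC(q) with input X (i.e., Y = X ⊕ N₁, Z = X ⊕ N₂ where N₁ ~ Bernoulli(p), N₂ ~ Bernoulli(q), and X, N₁, N₂ are mutually independent). Then the conditional entropy H(X | Y, Z) equals h(p) + h(q) - h(p ⊛ q), where h is binary entropy and p ⊛ q = p(1-q) + q(1-p). -/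
noncomputable def ent {α : Type*} [Fintype α] (f : α → ℝ) : ℝ :=
  ∑ a, -(f a * Real.logb 2 (f a))

def bsc (r : ℝ) (x y : Bool) : ℝ := if y = x then 1 - r else r

noncomputable def gg (x : ℝ) : ℝ := x * Real.logb 2 x

lemma gg_mul {a b : ℝ} (ha : 0 ≤ a) (hb : 0 ≤ b) :
    gg (a * b) = a * gg b + b * gg a := by
  rcases eq_or_lt_of_le ha with h|h
  · simp [gg, ← h]
  rcases eq_or_lt_of_le hb with h'|h'
  · simp [gg, ← h']
  · simp only [gg, Real.logb_mul h.ne' h'.ne']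
    ring

lemma gg_half : gg (1/2) = -(1/2) := by
  rw [gg, show (1/2:ℝ) = 2⁻¹ by norm_num, Real.logb_inv, Real.logb_self_eq_one] <;> norm_num

lemma gg_half_mul {t : ℝ} (ht : 0 ≤ t) : gg (1/2 * t) = 1/2 * gg t - t/2 := by
  rw [gg_mul (by norm_num) ht, gg_half]; ring

/-- For `X` uniform on `{0,1}` and `Y = X ⊕ N₁`, `Z = X ⊕ N₂` outputs of independent
BSC(p), BSC(q), the conditional entropy `H(X | Y, Z) = H(X,Y,Z) - H(Y,Z)` equals
`h(p) + h(q) - h(p ⊛ q)`. The joint distribution of `(X, Y, Z)` is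
`(1/2) · bsc p x y · bsc q x z`. -/
theorem condEnt_X_given_YZ (p q : ℝ)
    (hp0 : 0 ≤ p) (hp1 : p ≤ 1) (hq0 : 0 ≤ q) (hq1 : q ≤ 1) :
    ent (fun t : Bool × Bool × Bool => (1/2 : ℝ) * bsc p t.1 t.2.1 * bsc q t.1 t.2.2)
      - ent (fun yz : Bool × Bool => ∑ x : Bool, (1/2 : ℝ) * bsc p x yz.1 * bsc q x yz.2)
    = binEnt p + binEnt q - binEnt (binConv p q) := by
  have hp1' : (0:ℝ) ≤ 1 - p := by linarith
  have hq1' : (0:ℝ) ≤ 1 - q := by linarith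
  have hS0 : (0:ℝ) ≤ p * (1 - q) + q * (1 - p) := by positivity
  have hS1 : (0:ℝ) ≤ 1 - (p * (1 - q) + q * (1 - p)) := by nlinarith
  have key : ∀ a b : ℝ, 0 ≤ a → 0 ≤ b →
      gg (1/2 * a * b) = 1/2 * (a * gg b + b * gg a) - a * b / 2 := by
    intro a b ha hb
    rw [show 1/2 * a * b = 1/2 * (a * b) by ring, gg_half_mul (by positivity),
      gg_mul ha hb]
  have keyS : ∀ a b c d : ℝ, 0 ≤ a * b + c * d →
      gg (1/2 * a * b + 1/2 * c * d) = 1/2 * gg (a * b + c * d) - (a * b + c * d)/2 := by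
    intro a b c d h
    rw [show 1/2 * a * b + 1/2 * c * d = 1/2 * (a * b + c * d) by ring, gg_half_mul h]
  simp only [ent, Fintype.sum_prod_type, Fintype.sum_bool, bsc, binEnt, binConv,
    Bool.false_eq_true, Bool.true_eq_false, if_true, if_false,
    show ∀ x:ℝ, x * Real.logb 2 x = gg x from fun _ => rfl]
  rw [key (1-p) (1-q) hp1' hq1', key (1-p) q hp1' hq0, key p (1-q) hp0 hq1',
    key p q hp0 hq0,
    keyS (1-p) (1-q) p q (by nlinarith), keyS (1-p) q p (1-q) (by nlinarith),
    keyS p (1-q) (1-p) q (by nlinarith), keyS p q (1-p) (1-q) (by nlinarith),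
    show (1-p) * (1-q) + p * q = 1 - (p * (1 - q) + q * (1 - p)) by ring,
    show (1-p) * q + p * (1-q) = p * (1 - q) + q * (1 - p) by ring,
    show p * (1-q) + (1-p) * q = p * (1 - q) + q * (1 - p) by ring,
    show p * q + (1-p) * (1-q) = 1 - (p * (1 - q) + q * (1 - p)) by ring]
  ring
end

section
/- Let X be uniform on {0,1} and Y = X ⊕ N with N ~ Bernoulli(p) independent of X, 0 ≤ p ≤ 1. Then H(X | Y) = h(p), the binary entropy of p. Moreover, among all input distributions P_X on {0,1}, the uniform distribution maximizes H(X|Y) for 0 < p < 1/2; in fact for every P_X, H(X|Y) ≤ h(p). -/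
lemma ent_joint (PX : Bool → ℝ) (p : ℝ) :
  ent (fun t : Bool × Bool => PX t.1 * bsc p t.1 t.2)
    = -(PX false * (1-p) * Real.logb 2 (PX false * (1-p))) - PX false * p * Real.logb 2 (PX false * p)
      - PX true * p * Real.logb 2 (PX true * p) - PX true * (1-p) * Real.logb 2 (PX true*(1-p)) := by
  simp [ent, bsc, Fintype.sum_prod_type]; ring_nf

lemma ent_marg (PX : Bool → ℝ) (p : ℝ) :
  ent (fun y : Bool => ∑ x : Bool, PX x * bsc p x y)
    = -((PX false * (1-p) + PX true * p) * Real.logb 2 (PX false * (1-p) + PX true * p))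
      - (PX false * p + PX true * (1-p)) * Real.logb 2 (PX false * p + PX true * (1-p)) := by
  simp [ent, bsc]; ring_nf

lemma split2 (x c : ℝ) (hx : 0 ≤ x) (hc : 0 < c) :
    x * c * Real.logb 2 (x * c) = c * (x * Real.logb 2 x) + x * (c * Real.logb 2 c) := by
  rcases hx.eq_or_lt with h | h
  · simp [← h]
  · rw [Real.logb_mul h.ne' hc.ne']; ring

lemma hlog : Real.logb 2 (1/2 : ℝ) = -1 := by
  rw [show (1:ℝ)/2 = 2⁻¹ by norm_num, Real.logb_inv, Real.logb_self_eq_one] <;> norm_num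

lemma half_split (x : ℝ) (hx : 0 ≤ x) :
    (1/2:ℝ) * x * Real.logb 2 (1/2 * x) = 1/2 * (x * Real.logb 2 x) - x/2 := by
  rcases hx.eq_or_lt with h | h
  · simp [← h]
  · rw [Real.logb_mul (by norm_num) h.ne', hlog]; ring

lemma key (a p : ℝ) (ha0 : 0 ≤ a) (ha1 : a ≤ 1) (hp : 0 < p) (hp2 : p < 1/2) :
    binEnt a ≤ binEnt (a * (1 - p) + (1 - a) * p) := by
  rw [binEnt_eq, binEnt_eq]
  have hl : (0:ℝ) < Real.log 2 := Real.log_pos (by norm_num)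
  have hmain : Real.binEntropy a ≤ Real.binEntropy (a * (1 - p) + (1 - a) * p) := by
    set q := a * (1 - p) + (1 - a) * p with hq
    rcases le_or_gt a 2⁻¹ with h | h
    · have hq1 : q ≤ 2⁻¹ := by rw [hq]; nlinarith
      have hq0 : a ≤ q := by rw [hq]; nlinarith
      exact Real.binEntropy_strictMonoOn.monotoneOn ⟨ha0, h⟩ ⟨le_trans ha0 hq0, hq1⟩ hq0
    · have hq1 : 2⁻¹ ≤ q := by rw [hq]; nlinarith
      have hq0 : q ≤ a := by rw [hq]; nlinarith
      exact Real.binEntropy_strictAntiOn.antitoneOn ⟨hq1, le_trans hq0 ha1⟩ ⟨h.le, ha1⟩ hq0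
  exact div_le_div_of_nonneg_right hmain hl.le |>.trans_eq rfl

/-- For a BSC(p): with uniform input, `H(X|Y) = H(X,Y) - H(Y) = h(p)`; moreover, for
`0 < p < 1/2` and every input distribution `P_X`, `H(X|Y) ≤ h(p)` (so the uniform input
maximizes `H(X|Y)`). -/
theorem condEnt_bsc (p : ℝ) :
    (0 ≤ p → p ≤ 1 →
      ent (fun t : Bool × Bool => (1/2 : ℝ) * bsc p t.1 t.2)
        - ent (fun y : Bool => ∑ x : Bool, (1/2 : ℝ) * bsc p x y) = binEnt p) ∧
    (0 < p → p < 1/2 →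
      ∀ PX : Bool → ℝ, (∀ x, 0 ≤ PX x) → (∑ x, PX x = 1) →
        ent (fun t : Bool × Bool => PX t.1 * bsc p t.1 t.2)
          - ent (fun y : Bool => ∑ x : Bool, PX x * bsc p x y) ≤ binEnt p) := by
  constructor
  · intro hp0 hp1
    have hj : ent (fun t : Bool × Bool => (1/2 : ℝ) * bsc p t.1 t.2)
        = -((1/2:ℝ) * (1-p) * Real.logb 2 (1/2 * (1-p))) - 1/2 * p * Real.logb 2 (1/2 * p)
          - 1/2 * p * Real.logb 2 (1/2 * p) - 1/2 * (1-p) * Real.logb 2 (1/2 * (1-p)) :=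
      ent_joint (fun _ => (1/2 : ℝ)) p
    have hm : ent (fun y : Bool => ∑ x : Bool, (1/2 : ℝ) * bsc p x y) = 1 := by
      have hy : ∀ y, ∑ x : Bool, (1/2 : ℝ) * bsc p x y = 1/2 := by
        intro y; fin_cases y <;> simp [bsc] <;> ring
      simp only [ent, hy, Fintype.sum_bool, hlog]
      norm_num
    have hA := half_split (1-p) (by linarith)
    have hB := half_split p hp0
    rw [hj, hm, binEnt]
    linear_combination (-2:ℝ) * hA - 2 * hB
  · intro hp hp2 PX hpos hsum
    have hsum' : PX false + PX true = 1 := by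
      simp only [Fintype.sum_bool] at hsum; linarith
    have hb : PX true = 1 - PX false := by linarith
    have h1p : (0:ℝ) < 1 - p := by linarith
    have s1 := split2 (PX false) (1-p) (hpos false) h1p
    have s2 := split2 (PX false) p (hpos false) hp
    have s3 := split2 (PX true) p (hpos true) hp
    have s4 := split2 (PX true) (1-p) (hpos true) h1p
    have hj : ent (fun t : Bool × Bool => PX t.1 * bsc p t.1 t.2)
        = binEnt p + (-(PX false * Real.logb 2 (PX false)) - PX true * Real.logb 2 (PX true)) := by
      rw [ent_joint, binEnt]
      linear_combination (-1:ℝ) * s1 - s2 - s3 - s4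
        - (p * Real.logb 2 p + (1-p) * Real.logb 2 (1-p)) * hsum'
    have hm : ent (fun y : Bool => ∑ x : Bool, PX x * bsc p x y)
        = binEnt (PX false * (1-p) + PX true * p) := by
      rw [ent_marg, binEnt,
        show (1:ℝ) - (PX false * (1-p) + PX true * p) = PX false * p + PX true * (1-p) by
          linear_combination -hsum']
    rw [hj, hm, hb]
    have hk := key (PX false) p (hpos false) (by linarith [hpos true]) hp hp2
    simp only [binEnt] at hk ⊢
    linarith
end

section
/- Leftover hash lemma: Let 𝒢 be a 2-universal family of hash functions from {0,1}ⁿ to {0,1}ˡ, let G be uniform on 𝒢 and independent of a random variable W on {0,1}ⁿ. Then the statistical (total variation) distance between the joint distribution of (G(W), G) and (U_l, G), where U_l is uniform on {0,1}ˡ and independent of G, is at most (1/2)·√(2^{l - H_∞(W)}), where H_∞(W) = min_w (-log₂ P_W(w)). -/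
/-- Leftover hash lemma. `𝒢` is a 2-universal family of hash functions from `{0,1}ⁿ` to
`{0,1}ˡ` (for a uniform `G ∈ 𝒢` and any distinct `x₁ ≠ x₂`, the pair `(G x₁, G x₂)` is
uniform on pairs), `pW` is the distribution of `W` on `{0,1}ⁿ`, independent of `G`.
The statistical distance between the joint distribution of `(G(W), G)` and that of
`(U_l, G)` is at most `(1/2)·√(2^(l - H_∞(W)))`, where `H_∞(W) = -log₂ max_w pW w`. -/
theorem leftover_hash_lemma (n l : ℕ)
    (𝒢 : Finset ((Fin n → Bool) → (Fin l → Bool))) (hG : 𝒢.Nonempty)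
    (huniv : ∀ x₁ x₂ : Fin n → Bool, x₁ ≠ x₂ → ∀ y₁ y₂ : Fin l → Bool,
      ((𝒢.filter (fun g => g x₁ = y₁ ∧ g x₂ = y₂)).card : ℝ) / 𝒢.card
        = (((2 : ℝ) ^ l)⁻¹) ^ 2)
    (pW : (Fin n → Bool) → ℝ) (hpW : ∀ w, 0 ≤ pW w) (hsum : ∑ w, pW w = 1) :
    (1/2 : ℝ) * ∑ y : Fin l → Bool, ∑ g ∈ 𝒢,
        |(𝒢.card : ℝ)⁻¹ * (∑ w : Fin n → Bool, if g w = y then pW w else 0)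
          - (𝒢.card : ℝ)⁻¹ * ((2 : ℝ) ^ l)⁻¹|
      ≤ (1/2 : ℝ) * Real.sqrt ((2 : ℝ) ^
          ((l : ℝ) - (-Real.logb 2 (Finset.univ.sup' Finset.univ_nonempty pW)))) := by
  classical
  set c : ℝ := (𝒢.card : ℝ) with hc
  have hc0 : (0:ℝ) < c := by rw [hc]; exact_mod_cast Finset.card_pos.mpr hG
  set M : ℝ := (2:ℝ)^l with hMdef
  have hM0 : (0:ℝ) < M := by positivity
  have hcardκ : ((Fintype.card (Fin l → Bool)) : ℝ) = M := by
    simp [hMdef, Fintype.card_fun]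
  set mx : ℝ := Finset.univ.sup' Finset.univ_nonempty pW with hmxdef
  have hmx_le : ∀ w, pW w ≤ mx := fun w => Finset.le_sup' pW (Finset.mem_univ w)
  have hmx0 : (0:ℝ) < mx := by
    by_contra h
    push_neg at h
    have : ∑ w, pW w ≤ 0 :=
      Finset.sum_nonpos (fun w _ => le_trans (hmx_le w) h)
    linarith
  -- the inner y-sum of a product of indicators
  have hyprod : ∀ (g : (Fin n → Bool) → (Fin l → Bool)) (w₁ w₂ : Fin n → Bool),
      (∑ y : Fin l → Bool,
        (if g w₁ = y then pW w₁ else 0) * (if g w₂ = y then pW w₂ else 0))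
      = if g w₁ = g w₂ then pW w₁ * pW w₂ else 0 := by
    intro g w₁ w₂
    rcases eq_or_ne (g w₁) (g w₂) with h | h
    · simp [h, Finset.sum_ite_eq]
    · have hz : ∀ y : Fin l → Bool,
          (if g w₁ = y then pW w₁ else 0) * (if g w₂ = y then pW w₂ else 0) = 0 := by
        intro y
        rcases eq_or_ne (g w₁) y with h1 | h1
        · have : g w₂ ≠ y := fun h2 => h (h1.trans h2.symm)
          simp [h1, this]
        · simp [h1]
      simp [hz, h]
  -- counting functions
  have hN_off : ∀ w₁ w₂ : Fin n → Bool, w₁ ≠ w₂ →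
      (∑ g ∈ 𝒢, (if g w₁ = g w₂ then (1:ℝ) else 0)) = c * M⁻¹ := by
    intro w₁ w₂ hne
    have hstep : (∑ g ∈ 𝒢, (if g w₁ = g w₂ then (1:ℝ) else 0))
        = ∑ y : Fin l → Bool, ((𝒢.filter (fun g => g w₁ = y ∧ g w₂ = y)).card : ℝ) := by
      have : ∀ y : Fin l → Bool, ((𝒢.filter (fun g => g w₁ = y ∧ g w₂ = y)).card : ℝ)
          = ∑ g ∈ 𝒢, (if g w₁ = y ∧ g w₂ = y then (1:ℝ) else 0) := by
        intro y
        simp [Finset.sum_boole]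
      rw [Finset.sum_congr rfl (fun y _ => this y), Finset.sum_comm]
      refine Finset.sum_congr rfl (fun g _ => ?_)
      rcases eq_or_ne (g w₁) (g w₂) with h | h
      · simp [h, Finset.sum_ite_eq]
      · have hz : ∀ y : Fin l → Bool, ¬ (g w₁ = y ∧ g w₂ = y) := by
          rintro y ⟨h1, h2⟩
          exact h (h1.trans h2.symm)
        simp [hz, h]
    have hcard : ∀ y : Fin l → Bool,
        ((𝒢.filter (fun g => g w₁ = y ∧ g w₂ = y)).card : ℝ) = c * (M⁻¹)^2 := by
      intro y
      have := huniv w₁ w₂ hne y y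
      field_simp at this ⊢
      linarith [this]
    rw [hstep, Finset.sum_congr rfl (fun y _ => hcard y), Finset.sum_const,
      Finset.card_univ, nsmul_eq_mul, hcardκ]
    field_simp
  -- sum of p over everything is 1
  have hSa : (∑ y : Fin l → Bool, ∑ g ∈ 𝒢,
      c⁻¹ * (∑ w : Fin n → Bool, if g w = y then pW w else 0)) = 1 := by
    rw [Finset.sum_comm]
    have h1 : ∀ g ∈ 𝒢, (∑ y : Fin l → Bool,
        c⁻¹ * (∑ w : Fin n → Bool, if g w = y then pW w else 0)) = c⁻¹ := by
      intro g _
      rw [← Finset.mul_sum, Finset.sum_comm]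
      have h2 : ∀ w : Fin n → Bool,
          (∑ y : Fin l → Bool, if g w = y then pW w else 0) = pW w := by
        intro w; simp [Finset.sum_ite_eq]
      rw [Finset.sum_congr rfl (fun w _ => h2 w), hsum, mul_one]
    rw [Finset.sum_congr rfl h1, Finset.sum_const, nsmul_eq_mul]
    field_simp
    exact hc.symm
  -- sum of squares of pW is at most mx
  have hSpW2 : (∑ w : Fin n → Bool, pW w ^ 2) ≤ mx := by
    calc (∑ w : Fin n → Bool, pW w ^ 2) ≤ ∑ w : Fin n → Bool, mx * pW w := by
          refine Finset.sum_le_sum (fun w _ => ?_)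
          have := hpW w; have := hmx_le w; nlinarith
      _ = mx := by rw [← Finset.mul_sum, hsum, mul_one]
  -- the squared-collision sum
  have hA2 : (∑ y : Fin l → Bool, ∑ g ∈ 𝒢,
      (∑ w : Fin n → Bool, if g w = y then pW w else 0) ^ 2)
      = ∑ w₁ : Fin n → Bool, ∑ w₂ : Fin n → Bool,
          (pW w₁ * pW w₂) * (∑ g ∈ 𝒢, if g w₁ = g w₂ then (1:ℝ) else 0) := by
    rw [Finset.sum_comm]
    have h1 : ∀ g ∈ 𝒢, (∑ y : Fin l → Bool,
        (∑ w : Fin n → Bool, if g w = y then pW w else 0) ^ 2)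
        = ∑ w₁ : Fin n → Bool, ∑ w₂ : Fin n → Bool,
            (if g w₁ = g w₂ then pW w₁ * pW w₂ else 0) := by
      intro g _
      have h2 : ∀ y : Fin l → Bool,
          (∑ w : Fin n → Bool, if g w = y then pW w else 0) ^ 2
          = ∑ w₁ : Fin n → Bool, ∑ w₂ : Fin n → Bool,
              (if g w₁ = y then pW w₁ else 0) * (if g w₂ = y then pW w₂ else 0) := by
        intro y; rw [sq, Finset.sum_mul_sum]
      rw [Finset.sum_congr rfl (fun y _ => h2 y), Finset.sum_comm]
      refine Finset.sum_congr rfl (fun w₁ _ => ?_)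
      rw [Finset.sum_comm]
      exact Finset.sum_congr rfl (fun w₂ _ => hyprod g w₁ w₂)
    rw [Finset.sum_congr rfl h1, Finset.sum_comm]
    refine Finset.sum_congr rfl (fun w₁ _ => ?_)
    rw [Finset.sum_comm]
    refine Finset.sum_congr rfl (fun w₂ _ => ?_)
    rw [Finset.mul_sum]
    refine Finset.sum_congr rfl (fun g _ => ?_)
    split <;> simp
  -- bound on the collision sum
  have hA2le : (∑ w₁ : Fin n → Bool, ∑ w₂ : Fin n → Bool,
      (pW w₁ * pW w₂) * (∑ g ∈ 𝒢, if g w₁ = g w₂ then (1:ℝ) else 0))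
      ≤ c * mx + c * M⁻¹ := by
    have hb : ∀ w₁ w₂ : Fin n → Bool,
        (pW w₁ * pW w₂) * (∑ g ∈ 𝒢, if g w₁ = g w₂ then (1:ℝ) else 0)
        ≤ (pW w₁ * pW w₂) * ((if w₁ = w₂ then c else 0) + c * M⁻¹) := by
      intro w₁ w₂
      refine mul_le_mul_of_nonneg_left ?_ (mul_nonneg (hpW w₁) (hpW w₂))
      rcases eq_or_ne w₁ w₂ with h | h
      · subst h
        have h1 : (∑ g ∈ 𝒢, if g w₁ = g w₁ then (1:ℝ) else 0) = c := by
          simp [hc]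
        rw [h1, if_pos rfl]
        have : 0 ≤ c * M⁻¹ := by positivity
        linarith
      · rw [hN_off w₁ w₂ h, if_neg h, zero_add]
    calc (∑ w₁ : Fin n → Bool, ∑ w₂ : Fin n → Bool,
        (pW w₁ * pW w₂) * (∑ g ∈ 𝒢, if g w₁ = g w₂ then (1:ℝ) else 0))
        ≤ ∑ w₁ : Fin n → Bool, ∑ w₂ : Fin n → Bool,
            (pW w₁ * pW w₂) * ((if w₁ = w₂ then c else 0) + c * M⁻¹) :=
          Finset.sum_le_sum (fun w₁ _ => Finset.sum_le_sum (fun w₂ _ => hb w₁ w₂))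
      _ = (∑ w₁ : Fin n → Bool, pW w₁ ^ 2 * c) + c * M⁻¹ := by
          have h3 : ∀ w₁ : Fin n → Bool, (∑ w₂ : Fin n → Bool,
              (pW w₁ * pW w₂) * ((if w₁ = w₂ then c else 0) + c * M⁻¹))
              = pW w₁ ^ 2 * c + pW w₁ * (c * M⁻¹) := by
            intro w₁
            have h4 : ∀ w₂ : Fin n → Bool,
                (pW w₁ * pW w₂) * ((if w₁ = w₂ then c else 0) + c * M⁻¹)
                = (if w₁ = w₂ then pW w₁ * pW w₂ * c else 0)
                  + (pW w₁ * pW w₂) * (c * M⁻¹) := by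
              intro w₂; split <;> ring
            rw [Finset.sum_congr rfl (fun w₂ _ => h4 w₂), Finset.sum_add_distrib,
              Finset.sum_ite_eq, if_pos (Finset.mem_univ w₁)]
            have : (∑ w₂ : Fin n → Bool, (pW w₁ * pW w₂) * (c * M⁻¹))
                = pW w₁ * (c * M⁻¹) := by
              rw [← Finset.sum_mul, ← Finset.mul_sum, hsum, mul_one]
            rw [this]; ring
          have h5 : (∑ w₁ : Fin n → Bool, pW w₁ * (c * M⁻¹)) = c * M⁻¹ := by
            rw [← Finset.sum_mul, hsum, one_mul]
          rw [Finset.sum_congr rfl (fun w₁ _ => h3 w₁), Finset.sum_add_distrib, h5,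
            ← Finset.sum_mul]
      _ ≤ c * mx + c * M⁻¹ := by
          have : (∑ w₁ : Fin n → Bool, pW w₁ ^ 2 * c) = (∑ w₁, pW w₁ ^ 2) * c := by
            rw [Finset.sum_mul]
          rw [this]
          have := hSpW2
          nlinarith
  -- sum of squared deviations
  have hT : (∑ y : Fin l → Bool, ∑ g ∈ 𝒢,
      (c⁻¹ * (∑ w : Fin n → Bool, if g w = y then pW w else 0) - c⁻¹ * M⁻¹) ^ 2)
      ≤ c⁻¹ * mx := by
    have hexp : ∀ (y : Fin l → Bool) (g : (Fin n → Bool) → Fin l → Bool),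
        (c⁻¹ * (∑ w : Fin n → Bool, if g w = y then pW w else 0) - c⁻¹ * M⁻¹) ^ 2
        = c⁻¹ ^ 2 * (∑ w : Fin n → Bool, if g w = y then pW w else 0) ^ 2
          - (2 * (c⁻¹ * M⁻¹)) * (c⁻¹ * (∑ w : Fin n → Bool, if g w = y then pW w else 0))
          + (c⁻¹ * M⁻¹) ^ 2 := by
      intro y g; ring
    have hsplit : (∑ y : Fin l → Bool, ∑ g ∈ 𝒢,
        (c⁻¹ * (∑ w : Fin n → Bool, if g w = y then pW w else 0) - c⁻¹ * M⁻¹) ^ 2)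
        = c⁻¹ ^ 2 * (∑ y : Fin l → Bool, ∑ g ∈ 𝒢,
            (∑ w : Fin n → Bool, if g w = y then pW w else 0) ^ 2)
          - (2 * (c⁻¹ * M⁻¹)) * (∑ y : Fin l → Bool, ∑ g ∈ 𝒢,
            c⁻¹ * (∑ w : Fin n → Bool, if g w = y then pW w else 0))
          + M * c * (c⁻¹ * M⁻¹) ^ 2 := by
      simp_rw [hexp, Finset.sum_add_distrib, Finset.sum_sub_distrib,
        ← Finset.mul_sum, Finset.sum_const, nsmul_eq_mul, Finset.card_univ, hcardκ]
      ring
    rw [hsplit, hSa, hA2]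
    have hc' : c ≠ 0 := ne_of_gt hc0
    have hM' : M ≠ 0 := ne_of_gt hM0
    have key : c⁻¹ ^ 2 * (∑ w₁ : Fin n → Bool, ∑ w₂ : Fin n → Bool,
        (pW w₁ * pW w₂) * (∑ g ∈ 𝒢, if g w₁ = g w₂ then (1:ℝ) else 0))
        ≤ c⁻¹ ^ 2 * (c * mx + c * M⁻¹) :=
      mul_le_mul_of_nonneg_left hA2le (by positivity)
    have heq : c⁻¹ ^ 2 * (c * mx + c * M⁻¹)
        - (2 * (c⁻¹ * M⁻¹)) * 1 + M * c * (c⁻¹ * M⁻¹) ^ 2 = c⁻¹ * mx := by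
      field_simp
      ring
    linarith
  -- Cauchy–Schwarz over the product set
  set S : ℝ := ∑ y : Fin l → Bool, ∑ g ∈ 𝒢,
      |c⁻¹ * (∑ w : Fin n → Bool, if g w = y then pW w else 0) - c⁻¹ * M⁻¹| with hS
  have hS0 : 0 ≤ S := by
    refine Finset.sum_nonneg (fun y _ => Finset.sum_nonneg (fun g _ => abs_nonneg _))
  have hCS : S ^ 2 ≤ M * mx := by
    have h1 : S = ∑ z ∈ (Finset.univ : Finset (Fin l → Bool)) ×ˢ 𝒢,
        |c⁻¹ * (∑ w : Fin n → Bool, if z.2 w = z.1 then pW w else 0) - c⁻¹ * M⁻¹| := by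
      rw [hS, Finset.sum_product]
    have h2 := sq_sum_le_card_mul_sum_sq
      (s := (Finset.univ : Finset (Fin l → Bool)) ×ˢ 𝒢)
      (f := fun z => |c⁻¹ * (∑ w : Fin n → Bool, if z.2 w = z.1 then pW w else 0)
        - c⁻¹ * M⁻¹|)
    have h3 : (((Finset.univ : Finset (Fin l → Bool)) ×ˢ 𝒢).card : ℝ) = M * c := by
      rw [Finset.card_product, Finset.card_univ]
      push_cast [hcardκ]
      simp [hc, hcardκ]
    have h4 : (∑ z ∈ (Finset.univ : Finset (Fin l → Bool)) ×ˢ 𝒢,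
        |c⁻¹ * (∑ w : Fin n → Bool, if z.2 w = z.1 then pW w else 0) - c⁻¹ * M⁻¹| ^ 2)
        = ∑ y : Fin l → Bool, ∑ g ∈ 𝒢,
            (c⁻¹ * (∑ w : Fin n → Bool, if g w = y then pW w else 0) - c⁻¹ * M⁻¹) ^ 2 := by
      rw [Finset.sum_product]
      exact Finset.sum_congr rfl (fun y _ => Finset.sum_congr rfl (fun g _ => sq_abs _))
    rw [h1]
    calc (∑ z ∈ (Finset.univ : Finset (Fin l → Bool)) ×ˢ 𝒢,
          |c⁻¹ * (∑ w : Fin n → Bool, if z.2 w = z.1 then pW w else 0) - c⁻¹ * M⁻¹|) ^ 2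
        ≤ (((Finset.univ : Finset (Fin l → Bool)) ×ˢ 𝒢).card : ℝ) * ∑ z ∈ (Finset.univ : Finset (Fin l → Bool)) ×ˢ 𝒢,
            |c⁻¹ * (∑ w : Fin n → Bool, if z.2 w = z.1 then pW w else 0)
              - c⁻¹ * M⁻¹| ^ 2 := h2
      _ = (M * c) * (∑ y : Fin l → Bool, ∑ g ∈ 𝒢,
            (c⁻¹ * (∑ w : Fin n → Bool, if g w = y then pW w else 0) - c⁻¹ * M⁻¹) ^ 2) := by
          rw [h3, h4]
      _ ≤ (M * c) * (c⁻¹ * mx) :=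
          mul_le_mul_of_nonneg_left hT (le_of_lt (mul_pos hM0 hc0))
      _ = M * mx := by
          rw [show (M * c) * (c⁻¹ * mx) = M * mx * (c * c⁻¹) by ring,
            mul_inv_cancel₀ (ne_of_gt hc0), mul_one]
  have hSle : S ≤ Real.sqrt (M * mx) :=
    (Real.le_sqrt hS0 (le_of_lt (mul_pos hM0 hmx0))).mpr hCS
  have hrhs : Real.sqrt ((2:ℝ) ^ ((l : ℝ) - (-Real.logb 2 mx))) = Real.sqrt (M * mx) := by
    congr 1
    rw [sub_neg_eq_add, Real.rpow_add (by norm_num : (0:ℝ) < 2),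
      Real.rpow_natCast, Real.rpow_logb (by norm_num) (by norm_num) hmx0]
  rw [hrhs]
  linarith
end
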